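/- Let 0 < α < s and let ν be a measure on ℝⁿ with ν(B[x,r]) ≤ r^s for all x ∈ ℝⁿ and r > 0. Define μ := ∑_{k=0}^∞ 2^(−kα) · ν⌊A_k with A_k := {y : k ≤ |y| < k+1}. Then there is a constant C(α) (one may take C(α) = 2^(α/2)·3^α/(1 − 2^(−α))) such that for every x ∈ ℝⁿ and every 0 < r ≤ |x|/2 one has μ(B[x,r]) ≤ C(α) · |x|^(−α) · r^s. -/

import Mathlib

open MeasureTheory Metric

lemma key' (t : ℝ) : t * (2:ℝ) ^ (-t) ≤ 3 * Real.sqrt 2 / 4 := by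
  have h2 : (2:ℝ) ^ (-t) = Real.exp (Real.log 2 * (-t)) := Real.rpow_def_of_pos (by norm_num) _
  have heu : Real.exp 1 * (Real.log 2 * t) ≤ Real.exp (Real.log 2 * t) := by
    have h := Real.add_one_le_exp (Real.log 2 * t - 1)
    calc Real.exp 1 * (Real.log 2 * t) ≤ Real.exp 1 * Real.exp (Real.log 2 * t - 1) := by
          nlinarith [Real.exp_pos (1:ℝ)]
      _ = Real.exp (Real.log 2 * t) := by rw [← Real.exp_add]; ring_nf
  have hlog := Real.log_two_gt_d9
  have he := Real.exp_one_gt_d9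
  have hsqrt : (1.414:ℝ) ≤ Real.sqrt 2 := by
    nlinarith [Real.sq_sqrt (show (0:ℝ) ≤ 2 by norm_num), Real.sqrt_nonneg 2]
  have hpos : 0 < Real.exp (Real.log 2 * t) := Real.exp_pos _
  have hel : 0 < Real.exp 1 * Real.log 2 := by positivity
  have h3 : t * Real.exp (Real.log 2 * (-t)) ≤ 1 / (Real.exp 1 * Real.log 2) := by
    rw [show Real.log 2 * (-t) = -(Real.log 2 * t) by ring, Real.exp_neg,
      mul_comm t, inv_mul_le_iff₀ hpos, mul_one_div, le_div_iff₀ hel]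
    nlinarith
  have h4 : 1 / (Real.exp 1 * Real.log 2) ≤ 3 * Real.sqrt 2 / 4 := by
    rw [div_le_div_iff₀ hel (by norm_num)]
    nlinarith
  rw [h2]; linarith

theorem stmt_8 (n : ℕ) (s α : ℝ) (hα : 0 < α) (hαs : α < s)
    (ν : Measure (EuclideanSpace ℝ (Fin n)))
    (hν : ∀ (x : EuclideanSpace ℝ (Fin n)) (r : ℝ), 0 < r →
      ν (closedBall x r) ≤ ENNReal.ofReal (r ^ s))
    (A : ℕ → Set (EuclideanSpace ℝ (Fin n)))
    (hA : ∀ k, A k = {y | (k : ℝ) ≤ ‖y‖ ∧ ‖y‖ < (k : ℝ) + 1})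
    (μ : Measure (EuclideanSpace ℝ (Fin n)))
    (hμ : μ = Measure.sum (fun k : ℕ =>
      ENNReal.ofReal ((2 : ℝ) ^ (-(k : ℝ) * α)) • ν.restrict (A k))) :
    ∀ (x : EuclideanSpace ℝ (Fin n)) (r : ℝ), 0 < r → r ≤ ‖x‖ / 2 →
      μ (closedBall x r) ≤
        ENNReal.ofReal ((2 : ℝ) ^ (α / 2) * 3 ^ α / (1 - (2 : ℝ) ^ (-α))
          * ‖x‖ ^ (-α) * r ^ s) := by
  intro x r hr hrx
  have hx : 0 < ‖x‖ := by linarith [norm_nonneg x]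
  set t : ℝ := ‖x‖ / 2 with htdef
  have ht : 0 < t := by positivity
  set k₀ : ℕ := Nat.ceil (t - 1) with hk₀def
  have hB : MeasurableSet (closedBall x r) := measurableSet_closedBall
  -- points of the ball have norm ≥ t
  have hmem : ∀ y ∈ closedBall x r, t ≤ ‖y‖ := by
    intro y hy
    have h1 : dist y x ≤ r := mem_closedBall.mp hy
    have h2 : ‖x‖ - ‖y‖ ≤ ‖x - y‖ := norm_sub_norm_le x y
    have h3 : ‖x - y‖ = dist y x := by rw [dist_eq_norm, norm_sub_rev]
    rw [htdef]; linarith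
  -- intersection is empty for small k
  have hempty : ∀ k < k₀, closedBall x r ∩ A k = ∅ := by
    intro k hk
    have hkt : (k : ℝ) < t - 1 := Nat.lt_ceil.mp hk
    ext y
    simp only [Set.mem_inter_iff, Set.mem_empty_iff_false, iff_false, hA, Set.mem_setOf_eq]
    rintro ⟨hy1, _, hy3⟩
    have := hmem y hy1
    linarith
  set f : ℕ → ENNReal := fun k =>
    ENNReal.ofReal ((2:ℝ) ^ (-(k:ℝ) * α)) * ν (closedBall x r ∩ A k) with hfdef
  have hμB : μ (closedBall x r) = ∑' k, f k := by
    rw [hμ, Measure.sum_apply _ hB]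
    refine tsum_congr fun k => ?_
    rw [Measure.smul_apply, Measure.restrict_apply hB, smul_eq_mul]
  -- shift the sum
  have hshift : ∑' k, f k = ∑' i, f (i + k₀) := by
    have h := Summable.sum_add_tsum_nat_add' (f := f) (k := k₀) ENNReal.summable
    rw [← h, Finset.sum_eq_zero, zero_add]
    intro i hi
    rw [hfdef]
    simp only [hempty i (Finset.mem_range.mp hi), measure_empty, mul_zero]
  set c : ENNReal := ENNReal.ofReal ((2:ℝ) ^ (-(k₀:ℝ) * α) * r ^ s) with hcdef
  have hterm : ∀ i : ℕ, f (i + k₀) ≤ ENNReal.ofReal ((2:ℝ) ^ (-α)) ^ i * c := by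
    intro i
    have hν' : ν (closedBall x r ∩ A (i + k₀)) ≤ ENNReal.ofReal (r ^ s) :=
      le_trans (measure_mono Set.inter_subset_left) (hν x r hr)
    have hre : (2:ℝ) ^ (-((i + k₀ : ℕ) : ℝ) * α)
        = ((2:ℝ) ^ (-α)) ^ i * (2:ℝ) ^ (-(k₀:ℝ) * α) := by
      rw [← Real.rpow_natCast ((2:ℝ) ^ (-α)) i, ← Real.rpow_mul (by norm_num : (0:ℝ) ≤ 2),
        ← Real.rpow_add (by norm_num : (0:ℝ) < 2)]
      congr 1
      push_cast
      ring
    calc f (i + k₀) ≤ ENNReal.ofReal ((2:ℝ) ^ (-((i + k₀ : ℕ) : ℝ) * α)) * ENNReal.ofReal (r ^ s) :=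
          mul_le_mul_right hν' _
      _ = ENNReal.ofReal ((2:ℝ) ^ (-α)) ^ i * c := by
          rw [hcdef, hre, ← ENNReal.ofReal_pow (by positivity),
            ← ENNReal.ofReal_mul (by positivity), ← ENNReal.ofReal_mul (by positivity),
            mul_assoc]
  have hq1 : (2:ℝ) ^ (-α) < 1 :=
    Real.rpow_lt_one_of_one_lt_of_neg (by norm_num) (by linarith)
  have hq0 : (0:ℝ) < (2:ℝ) ^ (-α) := Real.rpow_pos_of_pos (by norm_num) _
  have hgeom : ∑' i : ℕ, ENNReal.ofReal ((2:ℝ) ^ (-α)) ^ i * c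
      = ENNReal.ofReal ((1 - (2:ℝ) ^ (-α))⁻¹ * ((2:ℝ) ^ (-(k₀:ℝ) * α) * r ^ s)) := by
    have h1q : (0:ℝ) < 1 - (2:ℝ) ^ (-α) := by linarith
    rw [ENNReal.tsum_mul_right, ENNReal.tsum_geometric, hcdef,
      ENNReal.ofReal_mul (le_of_lt (inv_pos.mpr h1q))]
    congr 1
    rw [ENNReal.ofReal_inv_of_pos h1q, ENNReal.ofReal_sub _ hq0.le,
      ENNReal.ofReal_one]
  -- the real inequality
  have hcore : (2:ℝ) ^ (-(k₀:ℝ) * α) ≤ (2:ℝ) ^ (α / 2) * 3 ^ α * ‖x‖ ^ (-α) := by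
    have hk : t - 1 ≤ (k₀ : ℝ) := Nat.le_ceil _
    have h1 : (2:ℝ) ^ (-(k₀:ℝ)) ≤ (2:ℝ) ^ (-(t - 1)) :=
      Real.rpow_le_rpow_of_exponent_le (by norm_num) (by linarith)
    have h2 : (2:ℝ) ^ (-(t - 1)) = 2 * (2:ℝ) ^ (-t) := by
      rw [show -(t - 1) = 1 + -t by ring, Real.rpow_add (by norm_num), Real.rpow_one]
    have hkey := key' t
    have hbase : (2:ℝ) ^ (-(k₀:ℝ)) ≤ Real.sqrt 2 * 3 * ‖x‖⁻¹ := by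
      rw [show Real.sqrt 2 * 3 * ‖x‖⁻¹ = 3 * Real.sqrt 2 / ‖x‖ by ring,
        le_div_iff₀ hx]
      have : ‖x‖ = 2 * t := by rw [htdef]; ring
      nlinarith [Real.rpow_pos_of_pos (show (0:ℝ) < 2 by norm_num) (-(k₀:ℝ))]
    have hrw : (2:ℝ) ^ (α / 2) * 3 ^ α * ‖x‖ ^ (-α)
        = (Real.sqrt 2 * 3 * ‖x‖⁻¹) ^ α := by
      rw [Real.mul_rpow (by positivity) (by positivity),
        Real.mul_rpow (by positivity) (by norm_num),
        Real.rpow_neg (norm_nonneg x), ← Real.inv_rpow (norm_nonneg x),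
        Real.sqrt_eq_rpow, ← Real.rpow_mul (by norm_num : (0:ℝ) ≤ 2),
        show (1/2) * α = α/2 by ring]
    rw [hrw, neg_mul, ← neg_mul, Real.rpow_mul (by norm_num : (0:ℝ) ≤ 2)]
    exact Real.rpow_le_rpow (by positivity) hbase hα.le
  have hfinal : (1 - (2:ℝ) ^ (-α))⁻¹ * ((2:ℝ) ^ (-(k₀:ℝ) * α) * r ^ s)
      ≤ (2:ℝ) ^ (α / 2) * 3 ^ α / (1 - (2:ℝ) ^ (-α)) * ‖x‖ ^ (-α) * r ^ s := by
    have hrs : (0:ℝ) < r ^ s := Real.rpow_pos_of_pos hr s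
    have h1q : (0:ℝ) < 1 - (2:ℝ) ^ (-α) := by linarith
    rw [div_eq_mul_inv, show (2:ℝ) ^ (α / 2) * 3 ^ α * (1 - (2:ℝ) ^ (-α))⁻¹ * ‖x‖ ^ (-α) * r ^ s
      = (1 - (2:ℝ) ^ (-α))⁻¹ * ((2:ℝ) ^ (α / 2) * 3 ^ α * ‖x‖ ^ (-α) * r ^ s) by ring]
    have := mul_le_mul_of_nonneg_right hcore hrs.le
    have hinv : (0:ℝ) ≤ (1 - (2:ℝ) ^ (-α))⁻¹ := by positivity
    nlinarith [mul_le_mul_of_nonneg_left this hinv]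
  calc μ (closedBall x r) = ∑' i, f (i + k₀) := by rw [hμB, hshift]
    _ ≤ ∑' i : ℕ, ENNReal.ofReal ((2:ℝ) ^ (-α)) ^ i * c := ENNReal.tsum_le_tsum hterm
    _ = ENNReal.ofReal ((1 - (2:ℝ) ^ (-α))⁻¹ * ((2:ℝ) ^ (-(k₀:ℝ) * α) * r ^ s)) := hgeom
    _ ≤ _ := ENNReal.ofReal_le_ofReal hfinal
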